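/- KKT characterization of the dual ADMM (y, v)-update. Let A ∈ R^{m×N}, b ∈ R^m, c ∈ R^N, ρ > 0, and for k = 1,…,p let H_k ∈ R^{n_k×N} and w_k ∈ R^{n_k}. Set D = Σ_{k=1}^p H_kᵀ H_k. Then a point (y*, v_1*, …, v_p*) with c − Aᵀ y* − Σ_{k=1}^p H_kᵀ v_k* = 0 minimizes the convex function (y, v_1, …, v_p) ↦ −⟨b, y⟩ + (ρ/2) Σ_{k=1}^p ‖w_k − v_k‖² over the affine set {(y, v_1,…,v_p) : c − Aᵀ y − Σ_k H_kᵀ v_k = 0} if and only if there exists x ∈ R^N such that D x + Aᵀ y* = c − Σ_{k=1}^p H_kᵀ w_k, A x = −ρ^{-1} b, and v_k* = w_k + H_k x for every k = 1,…,p. -/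

import Mathlib

open Matrix Finset
open scoped RealInnerProductSpace

private lemma dadmm_expand {n : ℕ} (u v d : Fin n → ℝ) (t : ℝ) :
    (u - (v + t • d)) ⬝ᵥ (u - (v + t • d)) =
      (u - v) ⬝ᵥ (u - v) - 2*t*((u - v) ⬝ᵥ d) + t^2*(d ⬝ᵥ d) := by
  simp only [dotProduct, Pi.sub_apply, Pi.add_apply, Pi.smul_apply, smul_eq_mul, Finset.mul_sum]
  rw [← Finset.sum_sub_distrib, ← Finset.sum_add_distrib]
  exact Finset.sum_congr rfl fun i _ => by ring

private lemma dadmm_dot_self_nonneg {n : ℕ} (u : Fin n → ℝ) : 0 ≤ u ⬝ᵥ u :=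
  Finset.sum_nonneg fun i _ => mul_self_nonneg _

private lemma dadmm_mulVec_dot {n N : ℕ} (M : Matrix (Fin n) (Fin N) ℝ) (x : Fin N → ℝ)
    (d : Fin n → ℝ) : (M.mulVec x) ⬝ᵥ d = x ⬝ᵥ Mᵀ.mulVec d := by
  rw [Matrix.dotProduct_mulVec x Mᵀ d, Matrix.vecMul_transpose]

private lemma dadmm_sum_mulVec {N N' p : ℕ} (M : Fin p → Matrix (Fin N') (Fin N) ℝ)
    (x : Fin N → ℝ) : (∑ k, M k).mulVec x = ∑ k, (M k).mulVec x :=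
  map_sum (AddMonoidHom.mk' (fun M : Matrix (Fin N') (Fin N) ℝ => M.mulVec x)
    (fun a b => Matrix.add_mulVec a b x)) _ _

private lemma dadmm_dot_sum {N p : ℕ} (x : Fin N → ℝ) (u : Fin p → Fin N → ℝ) :
    x ⬝ᵥ (∑ k, u k) = ∑ k, x ⬝ᵥ u k :=
  map_sum (AddMonoidHom.mk' (fun u : Fin N → ℝ => x ⬝ᵥ u)
    (fun a b => dotProduct_add x a b)) _ _

private lemma dadmm_zero_of_forall (L Q : ℝ) (hQ : 0 ≤ Q)
    (h : ∀ t : ℝ, 0 ≤ t * L + t^2 * Q) : L = 0 := by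
  have h1 : (0:ℝ) < Q + 1 := by linarith
  have ht := h (-L / (Q+1))
  have e : (-L/(Q+1)) * L + (-L/(Q+1))^2 * Q = -(L^2) / (Q+1)^2 := by
    field_simp; ring
  rw [e, le_div_iff₀ (pow_pos h1 2), zero_mul] at ht
  have hL2 : L ^ 2 = 0 := le_antisymm (by linarith) (sq_nonneg L)
  exact pow_eq_zero_iff two_ne_zero |>.mp hL2

private lemma dadmm_range_of_perp_ker {ι : Type*} [Fintype ι] {N : ℕ}
    (S : EuclideanSpace ℝ (Fin N) →ₗ[ℝ] EuclideanSpace ℝ ι)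
    (g : EuclideanSpace ℝ ι)
    (hg : ∀ z : EuclideanSpace ℝ ι, (∀ x, ⟪S x, z⟫ = 0) → ⟪z, g⟫ = 0) :
    ∃ x, S x = g := by
  have hmem : g ∈ (LinearMap.range S)ᗮᗮ := by
    rw [Submodule.mem_orthogonal]
    intro z hz
    exact hg z (fun x => hz (S x) ⟨x, rfl⟩)
  rw [Submodule.orthogonal_orthogonal] at hmem
  exact hmem

private lemma dadmm_inner {m : ℕ} {p : ℕ} {nk : Fin p → ℕ}
    (a b : EuclideanSpace ℝ (Sum (Fin m) ((k : Fin p) × Fin (nk k)))) :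
    ⟪a, b⟫ = (∑ i, a (Sum.inl i) * b (Sum.inl i))
      + ∑ k, ∑ j, a (Sum.inr ⟨k, j⟩) * b (Sum.inr ⟨k, j⟩) := by
  rw [PiLp.inner_apply, Fintype.sum_sum_type, ← Finset.univ_sigma_univ, Finset.sum_sigma]
  simp [RCLike.inner_apply, mul_comm]

private def dadmmMap0 {m N p : ℕ} (A : Matrix (Fin m) (Fin N) ℝ) (nk : Fin p → ℕ)
    (H : (k : Fin p) → Matrix (Fin (nk k)) (Fin N) ℝ) :
    (Fin N → ℝ) →ₗ[ℝ] ((Sum (Fin m) ((k : Fin p) × Fin (nk k))) → ℝ) where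
  toFun x := Sum.elim (A.mulVec x) fun q => (H q.1).mulVec x q.2
  map_add' x y := by funext q; cases q <;> simp [Matrix.mulVec_add]
  map_smul' r x := by funext q; cases q <;> simp [Matrix.mulVec_smul]

private noncomputable def dadmmMap {m N p : ℕ} (A : Matrix (Fin m) (Fin N) ℝ) (nk : Fin p → ℕ)
    (H : (k : Fin p) → Matrix (Fin (nk k)) (Fin N) ℝ) :
    EuclideanSpace ℝ (Fin N) →ₗ[ℝ]
      EuclideanSpace ℝ (Sum (Fin m) ((k : Fin p) × Fin (nk k))) :=
  ((WithLp.linearEquiv 2 ℝ ((Sum (Fin m) ((k : Fin p) × Fin (nk k))) → ℝ)).symm.toLinearMap.comp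
    (dadmmMap0 A nk H)).comp (WithLp.linearEquiv 2 ℝ ((Fin N) → ℝ)).toLinearMap

private lemma dadmmMap_apply {m N p : ℕ} (A : Matrix (Fin m) (Fin N) ℝ) (nk : Fin p → ℕ)
    (H : (k : Fin p) → Matrix (Fin (nk k)) (Fin N) ℝ) (x : Fin N → ℝ)
    (q : Sum (Fin m) ((k : Fin p) × Fin (nk k))) :
    dadmmMap A nk H (WithLp.toLp 2 x) q = Sum.elim (A.mulVec x) (fun q => (H q.1).mulVec x q.2) q := rfl

theorem dual_admm_yv_update_kkt {m N p : ℕ}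
    (A : Matrix (Fin m) (Fin N) ℝ) (b : Fin m → ℝ) (c : Fin N → ℝ)
    (ρ : ℝ) (hρ : 0 < ρ)
    (nk : Fin p → ℕ) (H : (k : Fin p) → Matrix (Fin (nk k)) (Fin N) ℝ)
    (w : (k : Fin p) → Fin (nk k) → ℝ)
    (ystar : Fin m → ℝ) (vstar : (k : Fin p) → Fin (nk k) → ℝ)
    (hfeas : c - Aᵀ.mulVec ystar - ∑ k, (H k)ᵀ.mulVec (vstar k) = 0) :
    (∀ (y : Fin m → ℝ) (v : (k : Fin p) → Fin (nk k) → ℝ),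
        c - Aᵀ.mulVec y - ∑ k, (H k)ᵀ.mulVec (v k) = 0 →
        -(b ⬝ᵥ ystar) + ρ / 2 * ∑ k, (w k - vstar k) ⬝ᵥ (w k - vstar k) ≤
          -(b ⬝ᵥ y) + ρ / 2 * ∑ k, (w k - v k) ⬝ᵥ (w k - v k)) ↔
      ∃ x : Fin N → ℝ,
        (∑ k, (H k)ᵀ * H k).mulVec x + Aᵀ.mulVec ystar =
            c - ∑ k, (H k)ᵀ.mulVec (w k) ∧
          A.mulVec x = -(ρ⁻¹ • b) ∧
          ∀ k, vstar k = w k + (H k).mulVec x := by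
  have hsumv : ∑ k, (H k)ᵀ.mulVec (vstar k) = c - Aᵀ.mulVec ystar := (sub_eq_zero.mp hfeas).symm
  constructor
  · -- forward direction
    intro hmin
    -- first-order condition
    have hfo : ∀ (dy : Fin m → ℝ) (dv : (k : Fin p) → Fin (nk k) → ℝ),
        Aᵀ.mulVec dy + ∑ k, (H k)ᵀ.mulVec (dv k) = 0 →
        -(b ⬝ᵥ dy) + ρ * ∑ k, (vstar k - w k) ⬝ᵥ dv k = 0 := by
      intro dy dv hker
      have hPL : ∑ k, (vstar k - w k) ⬝ᵥ dv k = -∑ k, (w k - vstar k) ⬝ᵥ dv k := by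
        rw [← Finset.sum_neg_distrib]
        exact Finset.sum_congr rfl fun k _ => by rw [← neg_dotProduct, neg_sub]
      have hT : 0 ≤ ∑ k, dv k ⬝ᵥ dv k := Finset.sum_nonneg fun k _ => dadmm_dot_self_nonneg _
      refine dadmm_zero_of_forall _ (ρ/2 * ∑ k, dv k ⬝ᵥ dv k)
        (mul_nonneg (by linarith) hT) (fun t => ?_)
      have hf2 : c - Aᵀ.mulVec (ystar + t • dy) -
          ∑ k, (H k)ᵀ.mulVec (vstar k + t • dv k) = 0 := by
        have e : ∑ k, (H k)ᵀ.mulVec (vstar k + t • dv k) =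
            ∑ k, (H k)ᵀ.mulVec (vstar k) + t • ∑ k, (H k)ᵀ.mulVec (dv k) := by
          rw [Finset.smul_sum, ← Finset.sum_add_distrib]
          exact Finset.sum_congr rfl fun k _ => by
            rw [Matrix.mulVec_add, Matrix.mulVec_smul]
        rw [e, Matrix.mulVec_add, Matrix.mulVec_smul]
        have e2 : c - (Aᵀ.mulVec ystar + t • Aᵀ.mulVec dy) -
            (∑ k, (H k)ᵀ.mulVec (vstar k) + t • ∑ k, (H k)ᵀ.mulVec (dv k)) =
            (c - Aᵀ.mulVec ystar - ∑ k, (H k)ᵀ.mulVec (vstar k)) -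
              t • (Aᵀ.mulVec dy + ∑ k, (H k)ᵀ.mulVec (dv k)) := by module
        rw [e2, hfeas, hker, smul_zero, sub_zero]
      have hle := hmin _ _ hf2
      have eb : b ⬝ᵥ (ystar + t • dy) = b ⬝ᵥ ystar + t * (b ⬝ᵥ dy) := by
        rw [dotProduct_add, dotProduct_smul, smul_eq_mul]
      have es : ∑ k, (w k - (vstar k + t • dv k)) ⬝ᵥ (w k - (vstar k + t • dv k)) =
          ∑ k, (w k - vstar k) ⬝ᵥ (w k - vstar k)
            - 2*t*(∑ k, (w k - vstar k) ⬝ᵥ dv k) + t^2 * ∑ k, dv k ⬝ᵥ dv k := by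
        rw [Finset.mul_sum, Finset.mul_sum, ← Finset.sum_sub_distrib, ← Finset.sum_add_distrib]
        exact Finset.sum_congr rfl fun k _ => dadmm_expand _ _ _ _
      rw [eb, es] at hle
      rw [hPL]
      nlinarith [hle]
    -- build the multiplier via the Euclidean duality lemma
    obtain ⟨xt', hxt⟩ := dadmm_range_of_perp_ker (dadmmMap A nk H)
      (WithLp.toLp 2 (Sum.elim (fun i => -(b i)) (fun q : (k : Fin p) × Fin (nk k) => ρ * (vstar q.1 q.2 - w q.1 q.2))))
      (by
        intro z hz
        set dy : Fin m → ℝ := fun i => z (Sum.inl i) with hdy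
        set dv : (k : Fin p) → Fin (nk k) → ℝ := fun k j => z (Sum.inr ⟨k, j⟩) with hdv
        have hx0 : ∀ x : Fin N → ℝ,
            x ⬝ᵥ (Aᵀ.mulVec dy + ∑ k, (H k)ᵀ.mulVec (dv k)) = 0 := by
          intro x
          have h := hz (WithLp.toLp 2 x)
          rw [dadmm_inner] at h
          rw [dotProduct_add, dadmm_dot_sum]
          have e1 : x ⬝ᵥ Aᵀ.mulVec dy = ∑ i, (dadmmMap A nk H (WithLp.toLp 2 x)) (Sum.inl i) * z (Sum.inl i) := by
            rw [← dadmm_mulVec_dot]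
            simp only [dadmmMap_apply, Sum.elim_inl, dotProduct, hdy]
          have e2 : ∀ k, x ⬝ᵥ (H k)ᵀ.mulVec (dv k) =
              ∑ j, (dadmmMap A nk H (WithLp.toLp 2 x)) (Sum.inr ⟨k, j⟩) * z (Sum.inr ⟨k, j⟩) := by
            intro k; rw [← dadmm_mulVec_dot]
            simp only [dadmmMap_apply, Sum.elim_inr, dotProduct, hdv]
          rw [e1]
          calc (∑ i, (dadmmMap A nk H (WithLp.toLp 2 x)) (Sum.inl i) * z (Sum.inl i))
                + ∑ k, x ⬝ᵥ (H k)ᵀ.mulVec (dv k)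
              = (∑ i, (dadmmMap A nk H (WithLp.toLp 2 x)) (Sum.inl i) * z (Sum.inl i))
                + ∑ k, ∑ j, (dadmmMap A nk H (WithLp.toLp 2 x)) (Sum.inr ⟨k, j⟩) * z (Sum.inr ⟨k, j⟩) := by
                rw [Finset.sum_congr rfl fun k _ => e2 k]
            _ = 0 := h
        have hker : Aᵀ.mulVec dy + ∑ k, (H k)ᵀ.mulVec (dv k) = 0 := by
          funext i
          have h := hx0 (Pi.single i 1)
          rw [single_dotProduct, one_mul] at h
          simpa using h
        have h0 := hfo dy dv hker
        rw [dadmm_inner]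
        have e1 : ∑ i, z (Sum.inl i) * Sum.elim (fun i => -(b i))
            (fun q : (k : Fin p) × Fin (nk k) => ρ * (vstar q.1 q.2 - w q.1 q.2)) (Sum.inl i)
            = -(b ⬝ᵥ dy) := by
          simp only [Sum.elim_inl, dotProduct]
          rw [← Finset.sum_neg_distrib]
          exact Finset.sum_congr rfl fun i _ => by ring
        have e2 : ∑ k, ∑ j, z (Sum.inr ⟨k, j⟩) * Sum.elim (fun i => -(b i))
            (fun q : (k : Fin p) × Fin (nk k) => ρ * (vstar q.1 q.2 - w q.1 q.2)) (Sum.inr ⟨k, j⟩)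
            = ρ * ∑ k, (vstar k - w k) ⬝ᵥ dv k := by
          rw [Finset.mul_sum]
          refine Finset.sum_congr rfl fun k _ => ?_
          simp only [Sum.elim_inr, dotProduct, Pi.sub_apply]
          rw [Finset.mul_sum]
          exact Finset.sum_congr rfl fun j _ => by ring
        rw [WithLp.ofLp_toLp, e1, e2, h0])
    obtain ⟨xt, rfl⟩ : ∃ x, WithLp.toLp 2 x = xt' := ⟨xt'.ofLp, rfl⟩
    -- extract components
    have hA : A.mulVec xt = -b := by
      funext i
      have h := congrFun (congrArg WithLp.ofLp hxt) (Sum.inl i)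
      rw [dadmmMap_apply] at h
      simpa using h
    have hH : ∀ k, (H k).mulVec xt = fun j => ρ * (vstar k j - w k j) := by
      intro k; funext j
      have h := congrFun (congrArg WithLp.ofLp hxt) (Sum.inr ⟨k, j⟩)
      rw [dadmmMap_apply] at h
      simpa using h
    refine ⟨ρ⁻¹ • xt, ?_, ?_, ?_⟩
    · have hHx : ∀ k, (H k).mulVec (ρ⁻¹ • xt) = vstar k - w k := by
        intro k
        funext j
        rw [Matrix.mulVec_smul]
        show ρ⁻¹ * ((H k).mulVec xt j) = _
        rw [hH k]
        show ρ⁻¹ * (ρ * (vstar k j - w k j)) = _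
        rw [← mul_assoc, inv_mul_cancel₀ hρ.ne', one_mul]
        rfl
      rw [dadmm_sum_mulVec]
      have e : ∀ k, ((H k)ᵀ * H k).mulVec (ρ⁻¹ • xt) =
          (H k)ᵀ.mulVec (vstar k) - (H k)ᵀ.mulVec (w k) := by
        intro k
        rw [← Matrix.mulVec_mulVec, hHx k, Matrix.mulVec_sub]
      rw [Finset.sum_congr rfl fun k _ => e k, Finset.sum_sub_distrib, hsumv]
      abel
    · rw [Matrix.mulVec_smul, hA, smul_neg]
    · intro k
      funext j
      rw [Pi.add_apply, Matrix.mulVec_smul]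
      show vstar k j = w k j + ρ⁻¹ * ((H k).mulVec xt j)
      rw [hH k]
      show vstar k j = w k j + ρ⁻¹ * (ρ * (vstar k j - w k j))
      rw [← mul_assoc, inv_mul_cancel₀ hρ.ne', one_mul]
      ring
  · -- reverse direction
    rintro ⟨x, h1, h2, h3⟩ y v hf
    have hsumv' : ∑ k, (H k)ᵀ.mulVec (v k) = c - Aᵀ.mulVec y := (sub_eq_zero.mp hf).symm
    have hwv : ∀ k, w k - vstar k = -((H k).mulVec x) := by
      intro k; rw [h3 k]; abel
    have hsum : ∑ k, (w k - v k) ⬝ᵥ (w k - v k) =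
        ∑ k, (w k - vstar k) ⬝ᵥ (w k - vstar k)
          - 2*1*(∑ k, (w k - vstar k) ⬝ᵥ (v k - vstar k))
          + 1^2 * ∑ k, (v k - vstar k) ⬝ᵥ (v k - vstar k) := by
      rw [Finset.mul_sum, Finset.mul_sum, ← Finset.sum_sub_distrib, ← Finset.sum_add_distrib]
      refine Finset.sum_congr rfl fun k _ => ?_
      have e : w k - v k = w k - (vstar k + (1:ℝ) • (v k - vstar k)) := by
        rw [one_smul]; abel
      rw [e, dadmm_expand]
    have hP : ∑ k, (w k - vstar k) ⬝ᵥ (v k - vstar k) = ρ⁻¹ * (b ⬝ᵥ ystar - b ⬝ᵥ y) := by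
      have e1 : ∀ k, (w k - vstar k) ⬝ᵥ (v k - vstar k)
          = -(x ⬝ᵥ (H k)ᵀ.mulVec (v k - vstar k)) := by
        intro k
        rw [hwv k, neg_dotProduct, dadmm_mulVec_dot]
      rw [Finset.sum_congr rfl fun k _ => e1 k, Finset.sum_neg_distrib, ← dadmm_dot_sum]
      have e2 : ∑ k, (H k)ᵀ.mulVec (v k - vstar k) = Aᵀ.mulVec (ystar - y) := by
        have : ∑ k, (H k)ᵀ.mulVec (v k - vstar k)
            = ∑ k, (H k)ᵀ.mulVec (v k) - ∑ k, (H k)ᵀ.mulVec (vstar k) := by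
          rw [← Finset.sum_sub_distrib]
          exact Finset.sum_congr rfl fun k _ => Matrix.mulVec_sub _ _ _
        rw [this, hsumv, hsumv', Matrix.mulVec_sub]
        abel
      rw [e2, ← dadmm_mulVec_dot, h2, neg_dotProduct, smul_dotProduct,
        dotProduct_sub, smul_eq_mul]
      ring
    rw [hsum, hP]
    have hT : 0 ≤ ∑ k, (v k - vstar k) ⬝ᵥ (v k - vstar k) :=
      Finset.sum_nonneg fun k _ => dadmm_dot_self_nonneg _
    have hexp : ρ / 2 * (∑ k, (w k - vstar k) ⬝ᵥ (w k - vstar k)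
        - 2*1*(ρ⁻¹ * (b ⬝ᵥ ystar - b ⬝ᵥ y))
          + 1^2 * ∑ k, (v k - vstar k) ⬝ᵥ (v k - vstar k)) =
        ρ / 2 * (∑ k, (w k - vstar k) ⬝ᵥ (w k - vstar k)) - (b ⬝ᵥ ystar - b ⬝ᵥ y)
          + ρ / 2 * ∑ k, (v k - vstar k) ⬝ᵥ (v k - vstar k) := by
      field_simp
    rw [hexp]
    have : 0 ≤ ρ / 2 * ∑ k, (v k - vstar k) ⬝ᵥ (v k - vstar k) :=
      mul_nonneg (by linarith) hT
    linarith
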